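/- If Φ is totally bounded with respect to the sup-norm distance, then the topology induced by the pseudo-metric D_X coincides with the initial topology on X with respect to Φ. -/

import Mathlib

open scoped ENNReal

/-- if `Φ` is totally bounded for the sup-norm distance, then the topology
induced by the pseudo-metric `D_X` coincides with the initial topology on `X` w.r.t. `Φ`. -/
theorem stmt3 {X : Type*} [Nonempty X] (Φ : Set (X → ℝ))
    (hb : ∀ φ ∈ Φ, ∃ C : ℝ, ∀ x, |φ x| ≤ C)
    (htb : ∀ ε : ℝ, 0 < ε → ∃ S : Finset (X → ℝ), ↑S ⊆ Φ ∧
      ∀ φ ∈ Φ, ∃ ψ ∈ S, (⨆ x, ENNReal.ofReal |φ x - ψ x|) < ENNReal.ofReal ε)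
    (DX : X → X → ℝ≥0∞)
    (hDX : ∀ x1 x2, DX x1 x2 = ⨆ φ ∈ Φ, ENNReal.ofReal |φ x1 - φ x2|) :
    TopologicalSpace.generateFrom
        { U : Set X | ∃ x : X, ∃ ε : ℝ≥0∞, 0 < ε ∧ U = { x' : X | DX x x' < ε } }
      = ⨅ φ ∈ Φ, TopologicalSpace.induced φ inferInstance := by
  classical
  set t : TopologicalSpace X := ⨅ φ ∈ Φ, TopologicalSpace.induced φ inferInstance with ht
  set g : Set (Set X) :=
    { U : Set X | ∃ x : X, ∃ ε : ℝ≥0∞, 0 < ε ∧ U = { x' : X | DX x x' < ε } } with hg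
  have hle : ∀ φ ∈ Φ, ∀ x1 x2, ENNReal.ofReal |φ x1 - φ x2| ≤ DX x1 x2 := by
    intro φ hφ x1 x2
    rw [hDX]
    exact le_iSup₂ (f := fun φ _ => ENNReal.ofReal |φ x1 - φ x2|) φ hφ
  refine le_antisymm ?_ ?_
  · -- generateFrom g ≤ t : each φ continuous w.r.t. the ball topology
    refine le_iInf fun φ => le_iInf fun hφ => ?_
    rw [← continuous_iff_le_induced]
    letI := TopologicalSpace.generateFrom g
    rw [continuous_iff_continuousAt]
    intro x
    rw [ContinuousAt, Metric.tendsto_nhds]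
    intro δ hδ
    have hball : IsOpen {x' : X | DX x x' < ENNReal.ofReal δ} :=
      TopologicalSpace.isOpen_generateFrom_of_mem ⟨x, _, ENNReal.ofReal_pos.mpr hδ, rfl⟩
    have hx : DX x x < ENNReal.ofReal δ := by
      have h0 : DX x x ≤ 0 := by
        rw [hDX]; exact iSup₂_le fun ψ hψ => by simp
      exact lt_of_le_of_lt h0 (ENNReal.ofReal_pos.mpr hδ)
    filter_upwards [hball.mem_nhds hx] with x' hx'
    have h1 := lt_of_le_of_lt (hle φ hφ x x') hx'
    rw [ENNReal.ofReal_lt_ofReal_iff hδ] at h1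
    rw [Real.dist_eq, abs_sub_comm]
    exact h1
  · -- t ≤ generateFrom g : every ball is open in the initial topology
    refine le_generateFrom ?_
    rintro U ⟨x, ε, hε, rfl⟩
    letI := t
    rw [isOpen_iff_mem_nhds]
    intro x0 hx0
    simp only [Set.mem_setOf_eq] at hx0
    obtain ⟨r, hr, hrlt⟩ := ENNReal.lt_iff_exists_add_pos_lt.mp hx0
    set δ : ℝ := (r : ℝ) / 3 with hδdef
    have hδ : 0 < δ := by positivity
    obtain ⟨S, hSΦ, hS⟩ := htb δ hδ
    have happrox : ∀ x', (∀ ψ ∈ S, |ψ x0 - ψ x'| < δ) →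
        ∀ φ ∈ Φ, |φ x0 - φ x'| ≤ 3 * δ := by
      intro x' hx' φ hφ
      obtain ⟨ψ, hψS, hψ⟩ := hS φ hφ
      have h1 : ∀ y, |φ y - ψ y| < δ := by
        intro y
        have h := lt_of_le_of_lt (le_iSup (fun y => ENNReal.ofReal |φ y - ψ y|) y) hψ
        rwa [ENNReal.ofReal_lt_ofReal_iff hδ] at h
      have h2 := hx' ψ hψS
      have h3 := h1 x0
      have h4 := h1 x'
      have h5 : |φ x0 - φ x'| ≤ |φ x0 - ψ x0| + |ψ x0 - ψ x'| + |ψ x' - φ x'| := by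
        calc |φ x0 - φ x'| ≤ |φ x0 - ψ x0| + |ψ x0 - φ x'| := abs_sub_le _ _ _
          _ ≤ |φ x0 - ψ x0| + (|ψ x0 - ψ x'| + |ψ x' - φ x'|) :=
              add_le_add_right (abs_sub_le _ _ _) _
          _ = _ := by ring
      have h6 : |ψ x' - φ x'| < δ := by rwa [abs_sub_comm]
      linarith
    -- the open neighborhood
    have hcontS : ∀ ψ ∈ S, Continuous ψ := by
      intro ψ hψ
      rw [continuous_iff_le_induced]
      exact iInf₂_le ψ (hSΦ hψ)
    set V : Set X := ⋂ ψ ∈ S, {x' | |ψ x0 - ψ x'| < δ} with hV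
    have hVopen : IsOpen V := by
      refine isOpen_biInter_finset fun ψ hψ => ?_
      have : {x' | |ψ x0 - ψ x'| < δ} = (fun x' => |ψ x0 - ψ x'|) ⁻¹' Set.Iio δ := rfl
      rw [this]
      exact isOpen_Iio.preimage ((continuous_const.sub (hcontS ψ hψ)).abs)
    have hx0V : x0 ∈ V := by
      refine Set.mem_iInter₂.mpr fun ψ hψ => ?_
      simp [hδ]
    have hsub : V ⊆ {x' | DX x x' < ε} := by
      intro x' hx'
      have hx'' : ∀ ψ ∈ S, |ψ x0 - ψ x'| < δ := fun ψ hψ => Set.mem_iInter₂.mp hx' ψ hψ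
      have hbound : DX x x' ≤ DX x x0 + ENNReal.ofReal (3 * δ) := by
        rw [hDX x x']
        refine iSup₂_le fun φ hφ => ?_
        calc ENNReal.ofReal |φ x - φ x'|
            ≤ ENNReal.ofReal (|φ x - φ x0| + |φ x0 - φ x'|) :=
              ENNReal.ofReal_le_ofReal (abs_sub_le _ _ _)
          _ = ENNReal.ofReal |φ x - φ x0| + ENNReal.ofReal |φ x0 - φ x'| :=
              ENNReal.ofReal_add (abs_nonneg _) (abs_nonneg _)
          _ ≤ DX x x0 + ENNReal.ofReal (3 * δ) :=
              add_le_add (hle φ hφ x x0)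
                (ENNReal.ofReal_le_ofReal (happrox x' hx'' φ hφ))
      have h3δ : ENNReal.ofReal (3 * δ) = (r : ℝ≥0∞) := by
        have : (3 : ℝ) * δ = (r : ℝ) := by rw [hδdef]; ring
        rw [this, ENNReal.ofReal_coe_nnreal]
      rw [h3δ] at hbound
      exact lt_of_le_of_lt hbound hrlt
    exact Filter.mem_of_superset (hVopen.mem_nhds hx0V) hsub
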